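/- For every positive integer n and every complex z with |z| < 1: 2 * Li_{1, 2n-1}(z) = sum_{k=1}^{2n-1} (-1)^{k+1} * Li_k(z) * Li_{2n-k}(z). -/

import Mathlib

open scoped BigOperators

/-- Multiple polylogarithm `Li_{s_1,...,s_l}(z) = ∑_{n_1 > ... > n_l ≥ 1} z^{n_1}/(n_1^{s_1}⋯n_l^{s_l})`. -/
noncomputable def multiLi (s : List ℕ) (z : ℂ) : ℂ :=
  ∑' f : {f : Fin s.length → ℕ // StrictAnti f ∧ ∀ i, 1 ≤ f i},
    (if h : 0 < s.length then z ^ f.1 ⟨0, h⟩ else 1) /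
      ∏ i, (f.1 i : ℂ) ^ s.get i


lemma telescope (N : ℕ) (hN : 1 ≤ N) (a b : ℂ) :
    (a + b) * ∑ k ∈ Finset.Icc 1 (2*N-1), (-1:ℂ)^(k+1) * a^k * b^(2*N-k)
      = a * b^(2*N) + a^(2*N) * b := by
  have h1 : Finset.Icc 1 (2*N-1)
      = Finset.map ⟨fun i => i+1, add_left_injective 1⟩ (Finset.range (2*N-1)) := by
    ext x
    simp only [Finset.mem_Icc, Finset.mem_map, Finset.mem_range, Function.Embedding.coeFn_mk]
    constructor
    · rintro ⟨hx1, hx2⟩; exact ⟨x-1, by omega, by omega⟩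
    · rintro ⟨a, ha, rfl⟩; omega
  rw [h1, Finset.sum_map, Finset.mul_sum]
  simp only [Function.Embedding.coeFn_mk]
  have h2 : ∀ i ∈ Finset.range (2*N-1),
      (a+b) * ((-1:ℂ)^(i+1+1) * a^(i+1) * b^(2*N-(i+1)))
        = (fun i => (-1:ℂ)^i * a^(i+1) * b^(2*N-i)) i
          - (fun i => (-1:ℂ)^i * a^(i+1) * b^(2*N-i)) (i+1) := by
    intro i hi
    simp only [Finset.mem_range] at hi
    have h3 : 2*N - i = (2*N - (i+1)) + 1 := by omega
    simp only [h3]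
    generalize 2*N - (i+1) = m
    ring
  rw [Finset.sum_congr rfl h2, Finset.sum_range_sub']
  have h4 : 2*N - (2*N-1) = 1 := by omega
  have hodd : Odd (2*N-1) := ⟨N-1, by omega⟩
  simp only [pow_zero, zero_add, one_mul, h4, hodd.neg_one_pow, pow_one]
  have h6 : (2*N-1)+1 = 2*N := by omega
  rw [h6]
  simp

lemma keyfrac (N : ℕ) (hN : 1 ≤ N) (x y : ℂ) (hx : x ≠ 0) (hy : y ≠ 0) (hxy : x + y ≠ 0) :
    ∑ k ∈ Finset.Icc 1 (2*N-1), (-1:ℂ)^(k+1) / (x^k * y^(2*N-k))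
      = 1/((x+y) * y^(2*N-1)) + 1/((x+y) * x^(2*N-1)) := by
  have ha : (1/x) + (1/y) ≠ 0 := by
    rw [div_add_div _ _ hx hy]
    exact div_ne_zero (by simpa [add_comm] using hxy) (mul_ne_zero hx hy)
  have ht := telescope N hN (1/x) (1/y)
  have hs : ∑ k ∈ Finset.Icc 1 (2*N-1), (-1:ℂ)^(k+1) / (x^k * y^(2*N-k))
      = ∑ k ∈ Finset.Icc 1 (2*N-1), (-1:ℂ)^(k+1) * (1/x)^k * (1/y)^(2*N-k) := by
    refine Finset.sum_congr rfl fun k _ => ?_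
    rw [div_pow, div_pow, one_pow, one_pow]
    ring
  rw [hs]
  have hS : ∑ k ∈ Finset.Icc 1 (2*N-1), (-1:ℂ)^(k+1) * (1/x)^k * (1/y)^(2*N-k)
      = ((1/x) * (1/y)^(2*N) + (1/x)^(2*N) * (1/y)) / ((1/x)+(1/y)) := by
    rw [eq_div_iff ha]
    linear_combination ht
  rw [hS]
  have hM : 2*N = (2*N-1)+1 := by omega
  rw [hM]
  generalize 2*N-1 = M
  have hxM : x^M ≠ 0 := pow_ne_zero _ hx
  have hyM : y^M ≠ 0 := pow_ne_zero _ hy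
  simp only [Nat.add_sub_cancel]
  rw [div_eq_iff ha]
  field_simp
  ring_nf
  simp only [inv_pow]
  field_simp
  ring

def singleEquiv : {m : ℕ // m ∈ {x : ℕ | 1 ≤ x}} ≃ {f : Fin 1 → ℕ // StrictAnti f ∧ ∀ i, 1 ≤ f i} where
  toFun m := ⟨fun _ => m.1, by
    constructor
    · intro i j hij
      exact absurd (Subsingleton.elim i j) (ne_of_lt hij)
    · intro _; exact m.2⟩
  invFun f := ⟨f.1 0, f.2.2 0⟩
  left_inv m := rfl
  right_inv f := Subtype.ext (funext fun i => by rw [Subsingleton.elim i 0])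

lemma multiLi_single (k : ℕ) (hk : 1 ≤ k) (z : ℂ) :
    multiLi [k] z = ∑' m : ℕ, z ^ m / (m : ℂ) ^ k := by
  have hsupp : Function.support (fun m : ℕ => z ^ m / (m:ℂ)^k) ⊆ {x : ℕ | 1 ≤ x} := by
    intro m hm
    simp only [Function.mem_support] at hm
    simp only [Set.mem_setOf_eq]
    by_contra h
    push_neg at h
    interval_cases m
    exact hm (by simp [zero_pow (by omega : k ≠ 0)])
  rw [multiLi]
  simp only [List.length_cons, List.length_nil]
  rw [← Equiv.tsum_eq singleEquiv,
    ← tsum_subtype_eq_of_support_subset hsupp]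
  apply tsum_congr
  intro m
  simp [singleEquiv]

def pairEquiv (q : ℕ) : {mp : ℕ × ℕ // mp ∈ {x : ℕ × ℕ | 1 ≤ x.1 ∧ 1 ≤ x.2}}
    ≃ {f : Fin 2 → ℕ // StrictAnti f ∧ ∀ i, 1 ≤ f i} where
  toFun mp := ⟨![mp.1.1 + mp.1.2, mp.1.2], by
    obtain ⟨h1, h2⟩ := mp.2
    constructor
    · intro i j hij
      fin_cases i <;> fin_cases j <;> simp_all <;> omega
    · intro i
      fin_cases i <;> simp <;> omega⟩
  invFun f := ⟨(f.1 0 - f.1 1, f.1 1), by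
    have hlt : f.1 1 < f.1 0 := f.2.1 (by decide : (0:Fin 2) < 1)
    exact ⟨by omega, f.2.2 1⟩⟩
  left_inv mp := by
    obtain ⟨⟨m, p⟩, hm, hp⟩ := mp
    simp
  right_inv f := by
    have hlt : f.1 1 < f.1 0 := f.2.1 (by decide : (0:Fin 2) < 1)
    refine Subtype.ext (funext fun i => ?_)
    fin_cases i <;> simp <;> omega

lemma multiLi_pair (q : ℕ) (hq : 1 ≤ q) (z : ℂ) :
    multiLi [1, q] z = ∑' mp : {x : ℕ × ℕ | 1 ≤ x.1 ∧ 1 ≤ x.2},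
      z ^ (mp.1.1 + mp.1.2) / (((mp.1.1 + mp.1.2 : ℕ) : ℂ) * (mp.1.2 : ℂ) ^ q) := by
  rw [multiLi]
  simp only [List.length_cons, List.length_nil]
  rw [← Equiv.tsum_eq (pairEquiv q)]
  apply tsum_congr
  intro mp
  simp [pairEquiv, Fin.prod_univ_two]

lemma norm_div_nat_le (z : ℂ) (m : ℕ) (c : ℕ) : ‖z ^ m / (c:ℂ)‖ ≤ ‖z‖^m := by
  rw [norm_div, norm_pow, Complex.norm_natCast]
  rcases Nat.eq_zero_or_pos c with h|h
  · subst h; simp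
  · exact div_le_self (by positivity) (by exact_mod_cast h)

def swapEquiv : {x : ℕ × ℕ | 1 ≤ x.1 ∧ 1 ≤ x.2} ≃ {x : ℕ × ℕ | 1 ≤ x.1 ∧ 1 ≤ x.2} where
  toFun x := ⟨x.1.swap, x.2.2, x.2.1⟩
  invFun x := ⟨x.1.swap, x.2.2, x.2.1⟩
  left_inv x := rfl
  right_inv x := rfl

theorem two_mul_multiLi_one_odd (n : ℕ) (hn : 1 ≤ n) (z : ℂ) (hz : ‖z‖ < 1) :
    2 * multiLi [1, 2 * n - 1] z =
      ∑ k ∈ Finset.Icc 1 (2 * n - 1),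
        (-1 : ℂ) ^ (k + 1) * multiLi [k] z * multiLi [2 * n - k] z := by
  have hgeo : Summable fun m : ℕ => ‖z‖ ^ m := summable_geometric_of_lt_one (norm_nonneg z) hz
  have hA : ∀ k : ℕ, Summable fun m : ℕ => ‖z ^ m / (m:ℂ)^k‖ := by
    intro k
    refine Summable.of_nonneg_of_le (fun _ => norm_nonneg _) (fun m => ?_) hgeo
    have h : ((m:ℂ))^k = ((m^k : ℕ) : ℂ) := by push_cast; ring
    rw [h]
    exact norm_div_nat_le z m _
  have hPk : ∀ k ∈ Finset.Icc 1 (2*n-1),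
      (-1:ℂ)^(k+1) * multiLi [k] z * multiLi [2*n-k] z
        = ∑' mp : ℕ×ℕ, (-1:ℂ)^(k+1) * ((z^mp.1/(mp.1:ℂ)^k) * (z^mp.2/(mp.2:ℂ)^(2*n-k))) := by
    intro k hk
    simp only [Finset.mem_Icc] at hk
    rw [multiLi_single k (by omega) z, multiLi_single (2*n-k) (by omega) z,
      mul_assoc, tsum_mul_tsum_of_summable_norm (hA k) (hA (2*n-k)), ← tsum_mul_left]
  rw [Finset.sum_congr rfl hPk,
    ← Summable.tsum_finsetSum (fun k _ => ((summable_mul_of_summable_norm (hA k) (hA (2*n-k))).mul_left _))]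
  have hsupp : Function.support (fun mp : ℕ×ℕ => ∑ k ∈ Finset.Icc 1 (2*n-1),
      (-1:ℂ)^(k+1) * ((z^mp.1/(mp.1:ℂ)^k) * (z^mp.2/(mp.2:ℂ)^(2*n-k))))
      ⊆ {x : ℕ×ℕ | 1 ≤ x.1 ∧ 1 ≤ x.2} := by
    intro mp hmp
    simp only [Function.mem_support] at hmp
    by_contra h
    apply hmp
    refine Finset.sum_eq_zero fun k hk => ?_
    simp only [Finset.mem_Icc] at hk
    simp only [Set.mem_setOf_eq, not_and_or, not_le] at h
    rcases h with h | h
    · have h0 : mp.1 = 0 := by omega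
      rw [h0]; simp [zero_pow (show k ≠ 0 by omega)]
    · have h0 : mp.2 = 0 := by omega
      rw [h0]; simp [zero_pow (show 2*n-k ≠ 0 by omega)]
  rw [← tsum_subtype_eq_of_support_subset hsupp]
  have hpt : ∀ mp : {x : ℕ×ℕ | 1 ≤ x.1 ∧ 1 ≤ x.2},
      (∑ k ∈ Finset.Icc 1 (2*n-1),
        (-1:ℂ)^(k+1) * ((z^(mp.1.1)/(mp.1.1:ℂ)^k) * (z^(mp.1.2)/(mp.1.2:ℂ)^(2*n-k))))
      = z^(mp.1.1+mp.1.2) / (((mp.1.1+mp.1.2 : ℕ):ℂ) * (mp.1.2:ℂ)^(2*n-1))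
        + z^(mp.1.1+mp.1.2) / (((mp.1.1+mp.1.2 : ℕ):ℂ) * (mp.1.1:ℂ)^(2*n-1)) := by
    rintro ⟨⟨m,p⟩, hm, hp⟩
    simp only
    have hx : (m:ℂ) ≠ 0 := Nat.cast_ne_zero.mpr (by omega)
    have hy : (p:ℂ) ≠ 0 := Nat.cast_ne_zero.mpr (by omega)
    have hxy : (m:ℂ) + p ≠ 0 := by
      have h := Nat.cast_ne_zero (R := ℂ).mpr (show m+p ≠ 0 by omega)
      push_cast at h; exact h
    have hkf := keyfrac n hn (m:ℂ) (p:ℂ) hx hy hxy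
    calc ∑ k ∈ Finset.Icc 1 (2*n-1), (-1:ℂ)^(k+1) * ((z^m/(m:ℂ)^k) * (z^p/(p:ℂ)^(2*n-k)))
        = z^(m+p) * ∑ k ∈ Finset.Icc 1 (2*n-1), (-1:ℂ)^(k+1)/((m:ℂ)^k * (p:ℂ)^(2*n-k)) := by
          rw [Finset.mul_sum]
          refine Finset.sum_congr rfl fun k _ => ?_
          rw [pow_add]
          ring
      _ = _ := by
          rw [hkf]
          push_cast
          ring
  rw [tsum_congr hpt]
  have hsum1 : Summable fun mp : ℕ×ℕ =>
      z^(mp.1+mp.2) / (((mp.1+mp.2 : ℕ):ℂ) * (mp.2:ℂ)^(2*n-1)) := by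
    refine Summable.of_norm (Summable.of_nonneg_of_le (fun _ => norm_nonneg _) (fun mp => ?_)
      (hgeo.mul_of_nonneg hgeo (fun _ => by positivity) (fun _ => by positivity)))
    have h : (((mp.1+mp.2 : ℕ):ℂ) * (mp.2:ℂ)^(2*n-1)) = (((mp.1+mp.2) * mp.2^(2*n-1) : ℕ) : ℂ) := by
      push_cast; ring
    rw [h]
    calc ‖z ^ (mp.1+mp.2) / ((((mp.1+mp.2) * mp.2^(2*n-1) : ℕ)):ℂ)‖ ≤ ‖z‖^(mp.1+mp.2) :=
          norm_div_nat_le z _ _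
      _ = ‖z‖^mp.1 * ‖z‖^mp.2 := pow_add _ _ _
  have hsum2 : Summable fun mp : ℕ×ℕ =>
      z^(mp.1+mp.2) / (((mp.1+mp.2 : ℕ):ℂ) * (mp.1:ℂ)^(2*n-1)) := by
    refine Summable.of_norm (Summable.of_nonneg_of_le (fun _ => norm_nonneg _) (fun mp => ?_)
      (hgeo.mul_of_nonneg hgeo (fun _ => by positivity) (fun _ => by positivity)))
    have h : (((mp.1+mp.2 : ℕ):ℂ) * (mp.1:ℂ)^(2*n-1)) = (((mp.1+mp.2) * mp.1^(2*n-1) : ℕ) : ℂ) := by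
      push_cast; ring
    rw [h]
    calc ‖z ^ (mp.1+mp.2) / ((((mp.1+mp.2) * mp.1^(2*n-1) : ℕ)):ℂ)‖ ≤ ‖z‖^(mp.1+mp.2) :=
          norm_div_nat_le z _ _
      _ = ‖z‖^mp.1 * ‖z‖^mp.2 := pow_add _ _ _
  have h1 : Summable fun mp : {x : ℕ×ℕ | 1 ≤ x.1 ∧ 1 ≤ x.2} =>
      z^(mp.1.1+mp.1.2) / (((mp.1.1+mp.1.2 : ℕ):ℂ) * (mp.1.2:ℂ)^(2*n-1)) :=
    hsum1.subtype _
  have h2 : Summable fun mp : {x : ℕ×ℕ | 1 ≤ x.1 ∧ 1 ≤ x.2} =>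
      z^(mp.1.1+mp.1.2) / (((mp.1.1+mp.1.2 : ℕ):ℂ) * (mp.1.1:ℂ)^(2*n-1)) :=
    hsum2.subtype _
  rw [Summable.tsum_add h1 h2]
  have hswap : (∑' mp : {x : ℕ×ℕ | 1 ≤ x.1 ∧ 1 ≤ x.2},
        z^(mp.1.1+mp.1.2) / (((mp.1.1+mp.1.2 : ℕ):ℂ) * (mp.1.1:ℂ)^(2*n-1)))
      = ∑' mp : {x : ℕ×ℕ | 1 ≤ x.1 ∧ 1 ≤ x.2},
        z^(mp.1.1+mp.1.2) / (((mp.1.1+mp.1.2 : ℕ):ℂ) * (mp.1.2:ℂ)^(2*n-1)) := by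
    rw [← Equiv.tsum_eq swapEquiv (fun mp : {x : ℕ×ℕ | 1 ≤ x.1 ∧ 1 ≤ x.2} =>
      z^(mp.1.1+mp.1.2) / (((mp.1.1+mp.1.2 : ℕ):ℂ) * (mp.1.2:ℂ)^(2*n-1)))]
    apply tsum_congr
    intro mp
    simp only [swapEquiv, Equiv.coe_fn_mk, Prod.fst_swap, Prod.snd_swap]
    rw [Nat.add_comm mp.1.2 mp.1.1]
  rw [hswap, multiLi_pair (2*n-1) (by omega) z]
  ring
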